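/- arXiv:0705.0250 — 8 statements merged into one kernel-verified Lean document; each statement's English description precedes it below -/
import Mathlib

section
/- Let F : ℝ^{n+1} → Λ be continuously differentiable. Then pointwise on ℝ^{n+1}: m(d_{t,x}F) + d_{t,x}(mF) = ∂₀F and m(d*_{t,x}F) + d*_{t,x}(mF) = −∂₀F, where ∂₀ is the partial derivative with respect to the 0-th (vertical) coordinate. -/
open Finset

noncomputable section

/-- The exterior algebra `Λ` of `ℂ^{n+1}`, modelled by coefficient functions with
respect to the standard basis `{e_s : s ⊆ {0,…,n}}`. -/
abbrev Lam (n : ℕ) := Finset (Fin (n + 1)) → ℂ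

/-- The counting function `σ(s,t) := #{(s_i,t_j) ∈ s×t : s_i > t_j}`. -/
def sigCount {n : ℕ} (s t : Finset (Fin (n + 1))) : ℕ :=
  ((s ×ˢ t).filter fun p => p.2 < p.1).card

/-- The exterior product. -/
def wedge {n : ℕ} (f g : Lam n) : Lam n := fun u =>
  ∑ s ∈ u.powerset, (-1 : ℂ) ^ sigCount s (u \ s) * f s * g (u \ s)

/-- The (left) interior product. -/
def iprod {n : ℕ} (f g : Lam n) : Lam n := fun u =>
  ∑ s : Finset (Fin (n + 1)),
    if Disjoint s u then (-1 : ℂ) ^ sigCount s u * f s * g (s ∪ u) else 0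

/-- The basis vector `e_j` as a multivector. -/
def basisVec {n : ℕ} (j : Fin (n + 1)) : Lam n := fun s => if s = {j} then 1 else 0

/-- `m f := e₀ ∧ f + e₀ ⌟ f`. -/
def mOp {n : ℕ} (f : Lam n) : Lam n :=
  wedge (basisVec 0) f + iprod (basisVec 0) f

/-- The partial derivative `∂_j F` in the `j`-th coordinate direction of `ℝ^{n+1}`. -/
def pderiv {n : ℕ} (j : Fin (n + 1)) (F : (Fin (n + 1) → ℝ) → Lam n)
    (x : Fin (n + 1) → ℝ) : Lam n :=
  fderiv ℝ F x (Pi.single j 1)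

/-- The exterior derivative `d_{t,x} F := Σ_{j=0}^n e_j ∧ ∂_j F`. -/
def dtx {n : ℕ} (F : (Fin (n + 1) → ℝ) → Lam n) (x : Fin (n + 1) → ℝ) : Lam n :=
  ∑ j : Fin (n + 1), wedge (basisVec j) (pderiv j F x)

/-- The interior derivative `d*_{t,x} F := −Σ_{j=0}^n e_j ⌟ ∂_j F`. -/
def dstx {n : ℕ} (F : (Fin (n + 1) → ℝ) → Lam n) (x : Fin (n + 1) → ℝ) : Lam n :=
  -∑ j : Fin (n + 1), iprod (basisVec j) (pderiv j F x)

lemma sig_singleton {n : ℕ} (j : Fin (n + 1)) (t : Finset (Fin (n + 1))) :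
    sigCount {j} t = (t.filter (· < j)).card := by
  unfold sigCount
  rw [Finset.singleton_product, Finset.filter_map]
  rw [Finset.card_map]; rfl

lemma sig_zero {n : ℕ} (t : Finset (Fin (n + 1))) : sigCount ({0} : Finset (Fin (n+1))) t = 0 := by
  rw [sig_singleton]
  simp [Fin.not_lt_zero]

lemma wedge_basis {n : ℕ} (j : Fin (n + 1)) (f : Lam n) (u : Finset (Fin (n + 1))) :
    wedge (basisVec j) f u =
      if j ∈ u then (-1 : ℂ) ^ ((u \ {j}).filter (· < j)).card * f (u \ {j}) else 0 := by
  unfold wedge basisVec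
  simp only [mul_ite, mul_one, mul_zero, ite_mul, zero_mul]
  rw [Finset.sum_ite_eq' u.powerset ({j} : Finset (Fin (n+1)))
    (fun s => (-1:ℂ) ^ sigCount s (u \ s) * f (u \ s))]
  simp [Finset.singleton_subset_iff, sig_singleton]

lemma iprod_basis {n : ℕ} (j : Fin (n + 1)) (f : Lam n) (u : Finset (Fin (n + 1))) :
    iprod (basisVec j) f u =
      if j ∉ u then (-1 : ℂ) ^ (u.filter (· < j)).card * f (insert j u) else 0 := by
  unfold iprod basisVec
  rw [Fintype.sum_eq_single ({j} : Finset (Fin (n+1)))]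
  · simp [Finset.disjoint_singleton_left, sig_singleton, ← Finset.insert_eq]
  · intro s hs
    simp [hs]

lemma zero_lt_of_ne {n : ℕ} {j : Fin (n + 1)} (hj : j ≠ 0) : (0 : Fin (n + 1)) < j :=
  Fin.pos_of_ne_zero hj

lemma filter_lt_erase0 {n : ℕ} {j : Fin (n + 1)} (hj : j ≠ 0) {u : Finset (Fin (n + 1))}
    (h0 : (0 : Fin (n + 1)) ∈ u) :
    u.filter (· < j) = insert 0 ((u \ {0}).filter (· < j)) := by
  ext x
  by_cases hx : x = 0 <;>
    simp [hx, h0, zero_lt_of_ne hj, Finset.mem_filter, Finset.mem_sdiff]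

lemma card_filter_erase0 {n : ℕ} {j : Fin (n + 1)} (hj : j ≠ 0) {u : Finset (Fin (n + 1))}
    (h0 : (0 : Fin (n + 1)) ∈ u) :
    (u.filter (· < j)).card = ((u \ {0}).filter (· < j)).card + 1 := by
  rw [filter_lt_erase0 hj h0, Finset.card_insert_of_notMem] <;> simp

lemma neg_one_pow_succ (k : ℕ) : ((-1 : ℂ)) ^ (k + 1) = -((-1 : ℂ) ^ k) := by
  rw [pow_succ]; ring

lemma wedge_wedge {n : ℕ} (j : Fin (n + 1)) (f : Lam n) :
    wedge (basisVec 0) (wedge (basisVec j) f) + wedge (basisVec j) (wedge (basisVec 0) f) = 0 := by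
  funext u
  simp only [Pi.add_apply, Pi.zero_apply, wedge_basis, Fin.not_lt_zero, Finset.filter_false,
    Finset.card_empty, pow_zero, one_mul]
  by_cases hj : j = 0
  · subst hj; simp
  by_cases h0 : (0 : Fin (n+1)) ∈ u <;> by_cases hju : j ∈ u
  · have h0' : (0 : Fin (n+1)) ∈ u \ {j} := by simp [h0, Ne.symm hj]
    have hj' : j ∈ u \ {0} := by simp [hju, hj]
    have hset : (u \ {0}) \ {j} = (u \ {j}) \ {0} := by
      ext x; simp [Finset.mem_sdiff]; tauto
    rw [if_pos h0, if_pos hju, if_pos hj', if_pos h0',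
      card_filter_erase0 hj (by simp [h0, Ne.symm hj] : (0:Fin (n+1)) ∈ u \ {j}), hset,
      neg_one_pow_succ]
    ring
  · have hj' : j ∉ u \ {0} := by simp [hju]
    simp [hju, hj']
  · have h0' : (0 : Fin (n+1)) ∉ u \ {j} := by simp [h0]
    simp [h0, h0']
  · simp [h0, hju]

lemma iprod_iprod {n : ℕ} (j : Fin (n + 1)) (f : Lam n) :
    iprod (basisVec 0) (iprod (basisVec j) f) + iprod (basisVec j) (iprod (basisVec 0) f) = 0 := by
  funext u
  simp only [Pi.add_apply, Pi.zero_apply, iprod_basis, Fin.not_lt_zero, Finset.filter_false,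
    Finset.card_empty, pow_zero, one_mul]
  by_cases hj : j = 0
  · subst hj; simp
  by_cases h0 : (0 : Fin (n+1)) ∈ u <;> by_cases hju : j ∈ u
  · simp [h0, hju]
  · have h0' : (0 : Fin (n+1)) ∈ insert j u := by simp [h0]
    simp [h0, h0']
  · have hj' : j ∈ insert (0 : Fin (n+1)) u := by simp [hju]
    simp [hju, hj']
  · have h0' : (0 : Fin (n+1)) ∉ insert j u := by simp [Ne.symm hj, h0]
    have hj' : j ∉ insert (0 : Fin (n+1)) u := by simp [hj, hju]
    have hset : insert j (insert (0:Fin (n+1)) u) = insert 0 (insert j u) := by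
      rw [Finset.insert_comm]
    have hc : ((insert (0:Fin (n+1)) u).filter (· < j)).card = (u.filter (· < j)).card + 1 := by
      rw [Finset.filter_insert, if_pos (zero_lt_of_ne hj), Finset.card_insert_of_notMem]
      simp [h0]
    rw [if_pos h0, if_pos hj', if_pos hju, if_pos h0', hc, hset, neg_one_pow_succ]
    ring

lemma insert_sdiff_ne {n : ℕ} {a b : Fin (n + 1)} (h : b ≠ a) (u : Finset (Fin (n + 1))) :
    insert a u \ {b} = insert a (u \ {b}) := by
  ext x; by_cases hx : x = a <;> simp [hx, Ne.symm h, h]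

lemma insert_sdiff_self' {n : ℕ} {a : Fin (n + 1)} {u : Finset (Fin (n + 1))} (h : a ∉ u) :
    insert a u \ {a} = u := by
  rw [Finset.sdiff_singleton_eq_erase, Finset.erase_insert h]

lemma card_filter_insert0 {n : ℕ} {j : Fin (n + 1)} (hj : j ≠ 0) {u : Finset (Fin (n + 1))}
    (h0 : (0 : Fin (n + 1)) ∉ u) :
    ((insert (0 : Fin (n+1)) u).filter (· < j)).card = (u.filter (· < j)).card + 1 := by
  rw [Finset.filter_insert, if_pos (zero_lt_of_ne hj), Finset.card_insert_of_notMem]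
  simp [h0]

lemma iprod_wedge {n : ℕ} (j : Fin (n + 1)) (f : Lam n) :
    iprod (basisVec 0) (wedge (basisVec j) f) + wedge (basisVec j) (iprod (basisVec 0) f) =
      if j = 0 then f else 0 := by
  funext u
  simp only [Pi.add_apply, wedge_basis, iprod_basis, Fin.not_lt_zero, Finset.filter_false,
    Finset.card_empty, pow_zero, one_mul]
  by_cases hj : j = 0
  · subst hj
    by_cases h0 : (0 : Fin (n+1)) ∈ u
    · have h0' : (0 : Fin (n+1)) ∉ u \ {0} := by simp
      have hset : insert (0:Fin (n+1)) (u \ {0}) = u := by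
        rw [Finset.sdiff_singleton_eq_erase, Finset.insert_erase h0]
      simp [h0, h0', hset]
    · have hset : insert (0:Fin (n+1)) u \ {0} = u := insert_sdiff_self' h0
      simp [h0, hset]
  · rw [if_neg hj]
    by_cases h0 : (0 : Fin (n+1)) ∈ u
    · have h0' : (0 : Fin (n+1)) ∈ u \ {j} := by simp [h0, Ne.symm hj]
      simp [h0, h0']
    · by_cases hju : j ∈ u
      · have hji : j ∈ insert (0:Fin (n+1)) u := by simp [hju]
        have h0' : (0 : Fin (n+1)) ∉ u \ {j} := by simp [h0]
        have hset : insert (0:Fin (n+1)) u \ {j} = insert 0 (u \ {j}) :=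
          insert_sdiff_ne hj u
        have hc : ((insert (0:Fin (n+1)) u \ {j}).filter (· < j)).card
            = ((u \ {j}).filter (· < j)).card + 1 := by
          rw [hset, card_filter_insert0 hj h0']
        rw [if_pos h0, if_pos hji, if_pos hju, if_pos h0', hc, hset, neg_one_pow_succ,
          Pi.zero_apply]
        ring
      · have hji : j ∉ insert (0:Fin (n+1)) u := by simp [hj, hju]
        simp [h0, hju, hji]

lemma wedge_iprod {n : ℕ} (j : Fin (n + 1)) (f : Lam n) :
    wedge (basisVec 0) (iprod (basisVec j) f) + iprod (basisVec j) (wedge (basisVec 0) f) =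
      if j = 0 then f else 0 := by
  funext u
  simp only [Pi.add_apply, wedge_basis, iprod_basis, Fin.not_lt_zero, Finset.filter_false,
    Finset.card_empty, pow_zero, one_mul]
  by_cases hj : j = 0
  · subst hj
    by_cases h0 : (0 : Fin (n+1)) ∈ u
    · have h0' : (0 : Fin (n+1)) ∉ u \ {0} := by simp
      have hset : insert (0:Fin (n+1)) (u \ {0}) = u := by
        rw [Finset.sdiff_singleton_eq_erase, Finset.insert_erase h0]
      simp [h0, h0', hset]
    · have hset : insert (0:Fin (n+1)) u \ {0} = u := insert_sdiff_self' h0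
      simp [h0, hset]
  · rw [if_neg hj]
    by_cases hju : j ∈ u
    · have hj' : j ∈ u \ {0} := by simp [hju, hj]
      simp [hju, hj']
    · by_cases h0 : (0 : Fin (n+1)) ∈ u
      · have hj' : j ∉ u \ {0} := by simp [hju]
        have h0i : (0 : Fin (n+1)) ∈ insert j u := by simp [h0]
        have hset : insert j u \ {0} = insert j (u \ {0}) :=
          insert_sdiff_ne (Ne.symm hj) u
        have hc : (u.filter (· < j)).card = ((u \ {0}).filter (· < j)).card + 1 :=
          card_filter_erase0 hj h0
        rw [if_pos h0, if_pos hj', if_pos hju, if_pos h0i, hset, hc, neg_one_pow_succ,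
          Pi.zero_apply]
        ring
      · have h0i : (0 : Fin (n+1)) ∉ insert j u := by simp [Ne.symm hj, h0]
        simp [h0, hju, h0i]

lemma wedge_add_right {n : ℕ} (f g h : Lam n) :
    wedge f (g + h) = wedge f g + wedge f h := by
  funext u
  simp [wedge, mul_add, Finset.sum_add_distrib]

lemma iprod_add_right {n : ℕ} (f g h : Lam n) :
    iprod f (g + h) = iprod f g + iprod f h := by
  funext u
  unfold iprod
  rw [Pi.add_apply, ← Finset.sum_add_distrib]
  refine Finset.sum_congr rfl fun s _ => ?_
  split_ifs with hd
  · simp [mul_add]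
  · simp

lemma wedge_smul_right {n : ℕ} (r : ℝ) (f g : Lam n) :
    wedge f (r • g) = r • wedge f g := by
  funext u
  unfold wedge
  rw [Pi.smul_apply, Finset.smul_sum]
  exact Finset.sum_congr rfl fun s _ => by rw [Pi.smul_apply, mul_smul_comm]

lemma iprod_smul_right {n : ℕ} (r : ℝ) (f g : Lam n) :
    iprod f (r • g) = r • iprod f g := by
  funext u
  unfold iprod
  rw [Pi.smul_apply, Finset.smul_sum]
  refine Finset.sum_congr rfl fun s _ => ?_
  split_ifs with hd
  · rw [Pi.smul_apply, mul_smul_comm]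
  · simp

def mOp' {n : ℕ} (f : Lam n) : Lam n :=
  wedge (basisVec 0) f + iprod (basisVec 0) f

def mLin (n : ℕ) : Lam n →ₗ[ℝ] Lam n where
  toFun := mOp'
  map_add' f g := by
    unfold mOp'
    rw [wedge_add_right, iprod_add_right]
    abel
  map_smul' r f := by
    show wedge (basisVec 0) (r • f) + iprod (basisVec 0) (r • f)
      = r • (wedge (basisVec 0) f + iprod (basisVec 0) f)
    rw [wedge_smul_right, iprod_smul_right]
    simp [smul_add]

def mCLM (n : ℕ) : Lam n →L[ℝ] Lam n := (mLin n).toContinuousLinearMap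

lemma mOp'_sum {n : ℕ} {ι : Type*} (s : Finset ι) (g : ι → Lam n) :
    mOp' (∑ i ∈ s, g i) = ∑ i ∈ s, mOp' (g i) :=
  map_sum (mLin n) g s

lemma mOp'_neg {n : ℕ} (f : Lam n) : mOp' (-f) = -mOp' f :=
  map_neg (mLin n) f

lemma key1 {n : ℕ} (j : Fin (n + 1)) (f : Lam n) :
    mOp' (wedge (basisVec j) f) + wedge (basisVec j) (mOp' f) = if j = 0 then f else 0 := by
  unfold mOp'
  rw [wedge_add_right]
  have h1 := wedge_wedge j f
  have h2 := iprod_wedge j f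
  linear_combination (norm := abel) h1 + h2

lemma key2 {n : ℕ} (j : Fin (n + 1)) (f : Lam n) :
    mOp' (iprod (basisVec j) f) + iprod (basisVec j) (mOp' f) = if j = 0 then f else 0 := by
  unfold mOp'
  rw [iprod_add_right]
  have h1 := wedge_iprod j f
  have h2 := iprod_iprod j f
  linear_combination (norm := abel) h1 + h2

lemma mOp_eq {n : ℕ} : (mOp : Lam n → Lam n) = mOp' := rfl

lemma pderiv_mOp {n : ℕ} (F : (Fin (n + 1) → ℝ) → Lam n) (hF : ContDiff ℝ 1 F)
    (j : Fin (n + 1)) (x : Fin (n + 1) → ℝ) :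
    pderiv j (fun y => mOp' (F y)) x = mOp' (pderiv j F x) := by
  unfold pderiv
  have hd : HasFDerivAt F (fderiv ℝ F x) x := (hF.differentiable one_ne_zero x).hasFDerivAt
  have h : HasFDerivAt (fun y => mCLM n (F y)) ((mCLM n).comp (fderiv ℝ F x)) x :=
    (mCLM n).hasFDerivAt.comp x hd
  have heq : (fun y => mOp' (F y)) = fun y => mCLM n (F y) := rfl
  rw [heq, h.fderiv]
  rfl

/-- For `F : ℝ^{n+1} → Λ` continuously differentiable one has, pointwise,
`m(d_{t,x}F) + d_{t,x}(mF) = ∂₀F` and `m(d*_{t,x}F) + d*_{t,x}(mF) = −∂₀F`. -/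
theorem stmt2 (n : ℕ) (F : (Fin (n + 1) → ℝ) → Lam n) (hF : ContDiff ℝ 1 F) :
    ∀ x : Fin (n + 1) → ℝ,
      mOp (dtx F x) + dtx (fun y => mOp (F y)) x = pderiv 0 F x ∧
      mOp (dstx F x) + dstx (fun y => mOp (F y)) x = -pderiv 0 F x := by
  intro x
  constructor
  · rw [mOp_eq]
    unfold dtx
    rw [mOp'_sum]
    have hp : ∀ j : Fin (n + 1),
        wedge (basisVec j) (pderiv j (fun y => mOp' (F y)) x)
          = wedge (basisVec j) (mOp' (pderiv j F x)) := fun j => by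
      rw [pderiv_mOp F hF]
    simp_rw [hp]
    rw [← Finset.sum_add_distrib]
    simp_rw [key1]
    rw [Finset.sum_ite_eq' Finset.univ (0 : Fin (n + 1)) (fun j => pderiv j F x)]
    simp
  · rw [mOp_eq]
    unfold dstx
    rw [mOp'_neg, mOp'_sum]
    have hp : ∀ j : Fin (n + 1),
        iprod (basisVec j) (pderiv j (fun y => mOp' (F y)) x)
          = iprod (basisVec j) (mOp' (pderiv j F x)) := fun j => by
      rw [pderiv_mOp F hF]
    simp_rw [hp]
    rw [← neg_add, ← Finset.sum_add_distrib]
    simp_rw [key2]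
    rw [Finset.sum_ite_eq' Finset.univ (0 : Fin (n + 1)) (fun j => pderiv j F x)]
    simp
end
end

section
/- Let H be a complex Hilbert space, let V and W be closed subspaces of H, and let c ∈ [0,1) be such that |⟨u, w⟩| ≤ c‖u‖‖w‖ for all u ∈ V and w ∈ W. Let B be a bounded operator on H with Re⟨Bh, h⟩ ≥ κ‖h‖² for all h ∈ H, where κ > 0, and assume c‖B‖ < κ. Then there is a constant C, depending only on c, κ and ‖B‖, such that for every f ∈ V and every g ∈ H with Bg ∈ W one has ‖f‖ + ‖g‖ ≤ C‖f + g‖. -/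
/-- If `V, W` are closed subspaces of a complex Hilbert space `H` which are
transversal with constant `c < 1`, and if `B` is a bounded accretive operator
with constant `κ > 0` satisfying `c‖B‖ < κ`, then there is a constant `C`
(depending only on `c`, `κ` and `‖B‖`) such that `‖f‖ + ‖g‖ ≤ C‖f + g‖`
whenever `f ∈ V` and `Bg ∈ W`. -/
theorem stmt5 (c κ M : ℝ) (hc0 : 0 ≤ c) (hc1 : c < 1) (hκ : 0 < κ)
    (hcM : c * M < κ) :
    ∃ C : ℝ, ∀ (H : Type) [NormedAddCommGroup H] [InnerProductSpace ℂ H]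
      [CompleteSpace H] (V W : Submodule ℂ H),
      IsClosed (V : Set H) → IsClosed (W : Set H) →
      (∀ u ∈ V, ∀ w ∈ W, ‖(inner ℂ u w : ℂ)‖ ≤ c * ‖u‖ * ‖w‖) →
      ∀ B : H →L[ℂ] H, ‖B‖ = M →
      (∀ h : H, κ * ‖h‖ ^ 2 ≤ (inner ℂ (B h) h : ℂ).re) →
      ∀ f ∈ V, ∀ g : H, B g ∈ W → ‖f‖ + ‖g‖ ≤ C * ‖f + g‖ := by
  refine ⟨1 + 2 * M * (1 + c) / (κ - c * M), ?_⟩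
  intro H _ _ _ V W _ _ htrans B hB hacc f hf g hg
  have hM0 : 0 ≤ M := hB ▸ norm_nonneg B
  have hden : 0 < κ - c * M := by linarith
  have hT0 : 0 ≤ ‖f + g‖ := norm_nonneg _
  have hBg : ‖B g‖ ≤ M * ‖g‖ := hB ▸ B.le_opNorm g
  have h1 : κ * ‖g‖ ^ 2 ≤ (inner ℂ (B g) g : ℂ).re := hacc g
  have h2 : (inner ℂ (B g) g : ℂ) = inner ℂ (B g) (f + g) - inner ℂ (B g) f := by
    rw [inner_add_right]; ring
  have h3 : (inner ℂ (B g) (f + g) : ℂ).re ≤ M * ‖g‖ * ‖f + g‖ := by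
    calc (inner ℂ (B g) (f + g) : ℂ).re ≤ ‖(inner ℂ (B g) (f + g) : ℂ)‖ :=
          Complex.re_le_norm _
      _ ≤ ‖B g‖ * ‖f + g‖ := norm_inner_le_norm _ _
      _ ≤ M * ‖g‖ * ‖f + g‖ := by
          apply mul_le_mul_of_nonneg_right hBg hT0
  have h4 : ‖(inner ℂ (B g) f : ℂ)‖ ≤ c * M * ‖f‖ * ‖g‖ := by
    have := htrans f hf (B g) hg
    rw [norm_inner_symm] at this
    calc ‖(inner ℂ (B g) f : ℂ)‖ ≤ c * ‖f‖ * ‖B g‖ := this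
      _ ≤ c * ‖f‖ * (M * ‖g‖) := by
          apply mul_le_mul_of_nonneg_left hBg (by positivity)
      _ = c * M * ‖f‖ * ‖g‖ := by ring
  have h5 : -(inner ℂ (B g) f : ℂ).re ≤ ‖(inner ℂ (B g) f : ℂ)‖ := by
    have := Complex.abs_re_le_norm (inner ℂ (B g) f : ℂ)
    cases abs_cases (inner ℂ (B g) f : ℂ).re with
    | inl h => linarith [h.1, norm_nonneg (inner ℂ (B g) f : ℂ)]
    | inr h => linarith [h.1]
  have hre : (inner ℂ (B g) g : ℂ).re =
      (inner ℂ (B g) (f + g) : ℂ).re - (inner ℂ (B g) f : ℂ).re := by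
    rw [h2, Complex.sub_re]
  have key : κ * ‖g‖ ^ 2 ≤ M * ‖g‖ * ‖f + g‖ + c * M * ‖f‖ * ‖g‖ := by
    linarith
  have hftri : ‖f‖ ≤ ‖f + g‖ + ‖g‖ := by
    have : ‖f‖ = ‖(f + g) - g‖ := by rw [add_sub_cancel_right]
    rw [this]; exact norm_sub_le _ _
  have key2 : (κ - c * M) * ‖g‖ ^ 2 ≤ M * (1 + c) * ‖g‖ * ‖f + g‖ := by
    nlinarith [norm_nonneg g, mul_nonneg (mul_nonneg hc0 hM0) (norm_nonneg g)]
  have hgle : ‖g‖ ≤ M * (1 + c) / (κ - c * M) * ‖f + g‖ := by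
    rcases eq_or_lt_of_le (norm_nonneg g) with h | h
    · rw [← h]; positivity
    · rw [div_mul_eq_mul_div, le_div_iff₀ hden]
      nlinarith [key2, h]
  have heq : 2 * M * (1 + c) / (κ - c * M) =
      2 * (M * (1 + c) / (κ - c * M)) := by ring
  rw [heq]
  linarith
end

section
/- Let H be a complex Hilbert space, let V and W be closed subspaces, and let c ∈ [0,1) be such that |⟨u, w⟩| ≤ c‖u‖‖w‖ for all u ∈ V, w ∈ W, and also |⟨u, w⟩| ≤ c‖u‖‖w‖ for all u ∈ V^⊥, w ∈ W^⊥ (orthogonal complements). Let B be a bounded operator on H with Re⟨Bh, h⟩ ≥ κ‖h‖² for all h (κ > 0) and assume c‖B‖ < κ. Then H splits topologically: every h ∈ H can be written uniquely as h = f + g with f ∈ V and Bg ∈ W, and there is a constant C depending only on c, κ, ‖B‖ with ‖f‖ + ‖g‖ ≤ C‖h‖. -/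
lemma stmt6_aux {H : Type} [NormedAddCommGroup H] [InnerProductSpace ℂ H] [CompleteSpace H]
    {c κ M : ℝ} (hc0 : 0 ≤ c) (K : Submodule ℂ H) [K.HasOrthogonalProjection]
    (A : H →L[ℂ] H) (hA : ∀ x, ‖A x‖ ≤ M * ‖x‖)
    (y : H) (hacc : κ * ‖y‖ ^ 2 ≤ (inner ℂ (A y) y : ℂ).re)
    (htr : ‖(inner ℂ y (A y - (K.orthogonalProjectionOnto (A y) : H)) : ℂ)‖
      ≤ c * ‖y‖ * ‖A y - (K.orthogonalProjectionOnto (A y) : H)‖) :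
    (κ - c * M) * ‖y‖ ≤ ‖(K.orthogonalProjectionOnto (A y) : H)‖ := by
  set q : H := (K.orthogonalProjectionOnto (A y) : H) with hq
  set r : H := A y - q with hrdef
  have hsplit : A y = q + r := by rw [hrdef]; abel
  have hr_eq : r = (Kᗮ.orthogonalProjectionOnto (A y) : H) := by
    exact (Submodule.starProjection_orthogonal_val (K := K) (A y)).symm
  have hpyth : ‖A y‖ ^ 2 = ‖q‖ ^ 2 + ‖r‖ ^ 2 := by
    have h := Submodule.norm_sq_eq_add_norm_sq_projection (A y) K
    rw [hr_eq, hq]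
    simpa [Submodule.coe_norm] using h
  have hrle : ‖r‖ ≤ ‖A y‖ := by
    nlinarith [norm_nonneg r, norm_nonneg (A y), sq_nonneg ‖q‖]
  have hrM : ‖r‖ ≤ M * ‖y‖ := hrle.trans (hA y)
  have h2 : (inner ℂ q y : ℂ).re ≤ ‖q‖ * ‖y‖ := by
    calc (inner ℂ q y : ℂ).re ≤ ‖(inner ℂ q y : ℂ)‖ := Complex.re_le_norm _
    _ ≤ ‖q‖ * ‖y‖ := norm_inner_le_norm q y
  have h3 : (inner ℂ r y : ℂ).re ≤ c * M * ‖y‖ ^ 2 := by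
    have e1 : ‖(inner ℂ r y : ℂ)‖ = ‖(inner ℂ y r : ℂ)‖ := by
      rw [← inner_conj_symm]; exact (RCLike.norm_conj _)
    calc (inner ℂ r y : ℂ).re ≤ ‖(inner ℂ r y : ℂ)‖ := Complex.re_le_norm _
    _ = ‖(inner ℂ y r : ℂ)‖ := e1
    _ ≤ c * ‖y‖ * ‖r‖ := htr
    _ ≤ c * ‖y‖ * (M * ‖y‖) := by
        apply mul_le_mul_of_nonneg_left hrM (by positivity)
    _ = c * M * ‖y‖ ^ 2 := by ring
  have hsum : (inner ℂ (A y) y : ℂ).re = (inner ℂ q y : ℂ).re + (inner ℂ r y : ℂ).re := by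
    rw [hsplit, inner_add_left, Complex.add_re]
  rcases eq_or_lt_of_le (norm_nonneg y) with hy | hy
  · rw [← hy]; simp [norm_nonneg]
  · nlinarith [hacc, hsum, h2, h3]

/-- If `V, W` are closed subspaces of a complex Hilbert space `H` such that both
the pair `V, W` and the pair `V^⊥, W^⊥` are transversal with constant `c < 1`,
and if `B` is bounded and accretive with constant `κ > 0` and `c‖B‖ < κ`, then
every `h ∈ H` is uniquely `h = f + g` with `f ∈ V`, `Bg ∈ W`, and
`‖f‖ + ‖g‖ ≤ C‖h‖` with `C` depending only on `c`, `κ`, `‖B‖`. -/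
theorem stmt6 (c κ M : ℝ) (hc0 : 0 ≤ c) (hc1 : c < 1) (hκ : 0 < κ)
    (hcM : c * M < κ) :
    ∃ C : ℝ, ∀ (H : Type) [NormedAddCommGroup H] [InnerProductSpace ℂ H]
      [CompleteSpace H] (V W : Submodule ℂ H),
      IsClosed (V : Set H) → IsClosed (W : Set H) →
      (∀ u ∈ V, ∀ w ∈ W, ‖(inner ℂ u w : ℂ)‖ ≤ c * ‖u‖ * ‖w‖) →
      (∀ u ∈ Vᗮ, ∀ w ∈ Wᗮ, ‖(inner ℂ u w : ℂ)‖ ≤ c * ‖u‖ * ‖w‖) →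
      ∀ B : H →L[ℂ] H, ‖B‖ = M →
      (∀ h : H, κ * ‖h‖ ^ 2 ≤ (inner ℂ (B h) h : ℂ).re) →
      ∀ h : H,
        (∃! p : H × H, p.1 ∈ V ∧ B p.2 ∈ W ∧ h = p.1 + p.2) ∧
        (∀ f g : H, f ∈ V → B g ∈ W → h = f + g → ‖f‖ + ‖g‖ ≤ C * ‖h‖) := by
  refine ⟨1 + 2 * M / (κ - c * M), ?_⟩
  intro H _ _ _ V W hVc hWc hVW hVW' B hB hacc h
  have hκc : 0 < κ - c * M := by linarith
  haveI : CompleteSpace V := hVc.completeSpace_coe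
  haveI : CompleteSpace W := hWc.completeSpace_coe
  have hBnorm : ∀ x : H, ‖B x‖ ≤ M * ‖x‖ := fun x => by
    simpa [hB] using B.le_opNorm x
  have hM0 : 0 ≤ M := hB ▸ norm_nonneg B
  set Q := Wᗮ.orthogonalProjectionOnto with hQdef
  set P := V.orthogonalProjectionOnto with hPdef
  -- membership criteria
  have memW_of : ∀ x : H, (Q x : H) = 0 → x ∈ W := by
    intro x hx
    have h1 : x - (Q x : H) ∈ Wᗮᗮ := Submodule.sub_starProjection_mem_orthogonal (K := Wᗮ) x
    rw [hx, sub_zero, Submodule.orthogonal_orthogonal] at h1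
    exact h1
  have Q_of_mem : ∀ x : H, x ∈ W → Q x = 0 := fun x hx =>
    Submodule.orthogonalProjectionOnto_apply_of_mem_orthogonal
      (W.le_orthogonal_orthogonal hx)
  -- key estimate 1
  have key1 : ∀ f : H, f ∈ V → (κ - c * M) * ‖f‖ ≤ ‖(Q (B f) : H)‖ := by
    intro f hf
    apply stmt6_aux hc0 Wᗮ B hBnorm f (hacc f)
    have hmem : B f - (Q (B f) : H) ∈ W := by
      have h1 : B f - (Q (B f) : H) ∈ Wᗮᗮ :=
        Submodule.sub_starProjection_mem_orthogonal (K := Wᗮ) (B f)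
      rwa [Submodule.orthogonal_orthogonal] at h1
    exact hVW f hf _ hmem
  -- adjoint
  set Bs := ContinuousLinearMap.adjoint B with hBs
  have hBsnorm : ∀ x : H, ‖Bs x‖ ≤ M * ‖x‖ := by
    intro x
    have hn : ‖Bs‖ = M := by rw [hBs, ContinuousLinearMap.adjoint.norm_map B, hB]
    simpa [hn] using Bs.le_opNorm x
  have hsacc : ∀ x : H, κ * ‖x‖ ^ 2 ≤ (inner ℂ (Bs x) x : ℂ).re := by
    intro x
    have e : (inner ℂ (Bs x) x : ℂ) = starRingEnd ℂ (inner ℂ (B x) x) := by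
      rw [hBs, ContinuousLinearMap.adjoint_inner_left, ← inner_conj_symm]
    rw [e, Complex.conj_re]
    exact hacc x
  -- key estimate 2
  have key2 : ∀ y : H, y ∈ Wᗮ → (κ - c * M) * ‖y‖ ≤ ‖(P (Bs y) : H)‖ := by
    intro y hy
    apply stmt6_aux hc0 V Bs hBsnorm y (hsacc y)
    have hmem : Bs y - (P (Bs y) : H) ∈ Vᗮ :=
      Submodule.sub_starProjection_mem_orthogonal (K := V) (Bs y)
    have h1 := hVW' _ hmem y hy
    calc ‖(inner ℂ y (Bs y - (P (Bs y) : H)) : ℂ)‖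
        = ‖(inner ℂ (Bs y - (P (Bs y) : H)) y : ℂ)‖ := by
          rw [← inner_conj_symm]; exact RCLike.norm_conj _
    _ ≤ c * ‖Bs y - (P (Bs y) : H)‖ * ‖y‖ := h1
    _ = c * ‖y‖ * ‖Bs y - (P (Bs y) : H)‖ := by ring
  -- the operator T : V → Wᗮ
  set T : V →L[ℂ] Wᗮ := Q.comp (B.comp V.subtypeL) with hT
  have hTapp : ∀ f : V, T f = Q (B (f : H)) := fun f => rfl
  have hTlow : ∀ f : V, (κ - c * M) * ‖f‖ ≤ ‖T f‖ := by
    intro f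
    simpa [Submodule.coe_norm, hTapp] using key1 (f : H) f.2
  have hanti : AntilipschitzWith ⟨(κ - c * M)⁻¹, by positivity⟩ T := by
    apply T.antilipschitz_of_bound
    intro f
    have h1 := hTlow f
    show ‖f‖ ≤ (κ - c * M)⁻¹ * ‖T f‖
    rw [← div_eq_inv_mul, le_div_iff₀ hκc]
    linarith
  have hRtop : LinearMap.range (T : V →ₗ[ℂ] Wᗮ) = ⊤ := by
    haveI : CompleteSpace (LinearMap.range (T : V →ₗ[ℂ] Wᗮ)) := hanti.completeSpace_range_clm
    rw [← Submodule.orthogonal_eq_bot_iff, Submodule.eq_bot_iff]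
    intro y hy
    have hinner : ∀ f : V, (inner ℂ (T f) y : ℂ) = 0 := fun f =>
      (Submodule.mem_orthogonal _ _).1 hy _ (LinearMap.mem_range_self _ f)
    have hinner2 : ∀ f : V, (inner ℂ ((f : H)) (Bs (y : H)) : ℂ) = 0 := by
      intro f
      have e1 : (inner ℂ ((T f : H)) ((y : H)) : ℂ) = 0 := hinner f
      have hd : B (f : H) - ((T f) : H) ∈ Wᗮᗮ := by
        rw [hTapp]; exact Submodule.sub_starProjection_mem_orthogonal (K := Wᗮ) _
      have hz : (inner ℂ (B (f : H) - ((T f) : H)) ((y : H)) : ℂ) = 0 :=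
        Submodule.inner_left_of_mem_orthogonal y.2 hd
      rw [inner_sub_left, e1, sub_zero] at hz
      rw [hBs, ContinuousLinearMap.adjoint_inner_right]
      exact hz
    have hP0 : (P (Bs (y : H)) : H) = 0 := by
      have h0 := hinner2 (P (Bs (y : H)))
      have hz2 : (inner ℂ ((P (Bs (y : H)) : H)) (Bs (y : H) - (P (Bs (y : H)) : H)) : ℂ) = 0 :=
        Submodule.inner_right_of_mem_orthogonal (P (Bs (y : H))).2
          (Submodule.sub_starProjection_mem_orthogonal (K := V) _)
      rw [inner_sub_right, h0, zero_sub, neg_eq_zero] at hz2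
      exact inner_self_eq_zero.1 hz2
    have hk := key2 (y : H) y.2
    rw [hP0, norm_zero] at hk
    have hyn : ‖(y : H)‖ = 0 :=
      le_antisymm (le_of_mul_le_mul_left (by linarith : (κ - c * M) * ‖(y : H)‖ ≤ (κ - c * M) * 0) hκc)
        (norm_nonneg _)
    exact Submodule.coe_eq_zero.1 (norm_eq_zero.1 hyn)
  -- existence of the decomposition
  obtain ⟨f₀, hf₀⟩ : ∃ f₀ : V, T f₀ = Q (B h) := by
    have hm : Q (B h) ∈ LinearMap.range (T : V →ₗ[ℂ] Wᗮ) := by rw [hRtop]; trivial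
    exact hm
  have hsolW : B (h - (f₀ : H)) ∈ W := by
    apply memW_of
    have hQ : Q (B (h - (f₀ : H))) = Q (B h) - Q (B (f₀ : H)) := by
      rw [map_sub, map_sub]
    rw [hQ, ← hTapp, hf₀, sub_self, Submodule.coe_zero]
  have hsum0 : h = (f₀ : H) + (h - (f₀ : H)) := by abel
  -- uniqueness
  have huniq0 : ∀ u : H, u ∈ V → B u ∈ W → u = 0 := by
    intro u hu hBu
    have hQ0 : Q (B u) = 0 := Q_of_mem _ hBu
    have hk := key1 u hu
    rw [hQ0, Submodule.coe_zero, norm_zero] at hk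
    have : ‖u‖ = 0 :=
      le_antisymm (le_of_mul_le_mul_left (by linarith : (κ - c * M) * ‖u‖ ≤ (κ - c * M) * 0) hκc)
        (norm_nonneg _)
    exact norm_eq_zero.1 this
  -- the bound
  have hbound : ∀ f g : H, f ∈ V → B g ∈ W → h = f + g →
      ‖f‖ + ‖g‖ ≤ (1 + 2 * M / (κ - c * M)) * ‖h‖ := by
    intro f g hf hg hfg
    have hQf : Q (B f) = Q (B h) := by
      have e : B h = B f + B g := by rw [hfg, map_add]
      rw [e, map_add, Q_of_mem _ hg, add_zero]
    have h1 := key1 f hf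
    rw [hQf] at h1
    have h2 : ‖(Q (B h) : H)‖ ≤ M * ‖h‖ := by
      have ha : ‖Q (B h)‖ ≤ 1 * ‖B h‖ :=
        (Q.le_opNorm (B h)).trans
          (mul_le_mul_of_nonneg_right (Submodule.orthogonalProjectionOnto_norm_le _) (norm_nonneg _))
      rw [one_mul] at ha
      calc ‖(Q (B h) : H)‖ = ‖Q (B h)‖ := (Submodule.coe_norm _).symm
      _ ≤ ‖B h‖ := ha
      _ ≤ M * ‖h‖ := hBnorm h
    have hfb : ‖f‖ ≤ M / (κ - c * M) * ‖h‖ := by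
      rw [div_mul_eq_mul_div, le_div_iff₀ hκc, mul_comm]
      linarith
    have hgb : ‖g‖ ≤ ‖h‖ + ‖f‖ := by
      have : g = h - f := by rw [hfg]; abel
      rw [this]
      exact (norm_sub_le h f)
    have hexp : (1 + 2 * M / (κ - c * M)) * ‖h‖ = ‖h‖ + 2 * (M / (κ - c * M) * ‖h‖) := by
      ring
    rw [hexp]
    linarith
  refine ⟨⟨((f₀ : H), h - (f₀ : H)), ⟨f₀.2, hsolW, hsum0⟩, ?_⟩, hbound⟩
  rintro ⟨f', g'⟩ ⟨hf', hg', heq'⟩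
  have hu : f' - (f₀ : H) ∈ V := V.sub_mem hf' f₀.2
  have hfg' : f' - (f₀ : H) = (h - (f₀ : H)) - g' := by
    rw [heq']; abel
  have hBu : B (f' - (f₀ : H)) ∈ W := by
    rw [hfg', map_sub]
    exact W.sub_mem hsolW hg'
  have hzero : f' - (f₀ : H) = 0 := huniq0 _ hu hBu
  have hf'eq : f' = (f₀ : H) := by
    have := sub_eq_zero.1 hzero
    exact this
  have hg'eq : g' = h - (f₀ : H) := by
    rw [heq', hf'eq]; abel
  exact Prod.ext hf'eq hg'eq
end

section
/- Let H be a complex Hilbert space, let N^- be an orthogonal projection on H and N^+ := I − N^-. Let B be a bounded operator on H with Re⟨Bh, h⟩ ≥ κ‖h‖² for all h ∈ H, where κ > 0. Then B is invertible, the operator M_B := N^+ − B^{-1}N^-B is invertible, and the following commutation identities hold: (B^{-1}N^-B)M_B^{-1} = M_B^{-1}N^-, N^-M_B^{-1} = M_B^{-1}(B^{-1}N^-B), (B^{-1}N^+B)M_B^{-1} = M_B^{-1}N^+, and N^+M_B^{-1} = M_B^{-1}(B^{-1}N^+B). -/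
open ContinuousLinearMap in
theorem acc_isUnit {H : Type*} [NormedAddCommGroup H] [InnerProductSpace ℂ H]
    [CompleteSpace H] (B : H →L[ℂ] H) {κ : ℝ} (hκ : 0 < κ)
    (hacc : ∀ h : H, κ * ‖h‖ ^ 2 ≤ (inner ℂ (B h) h : ℂ).re) : IsUnit B := by
  have hzero : ∀ v : H, (inner ℂ (B v) v : ℂ) = 0 → v = 0 := by
    intro v hv
    have h1 := hacc v
    rw [hv, Complex.zero_re] at h1
    have h2 : ‖v‖ ^ 2 ≤ 0 := by nlinarith
    have h3 : ‖v‖ = 0 := by nlinarith [norm_nonneg v, sq_nonneg ‖v‖]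
    exact norm_eq_zero.mp h3
  have hinj : Function.Injective B := by
    intro x y hxy
    have h0 : B (x - y) = 0 := by rw [map_sub, hxy, sub_self]
    have := hzero (x - y) (by rw [h0, inner_zero_left])
    exact sub_eq_zero.mp this
  have hbound : ∀ x : H, ‖x‖ ≤ (⟨κ⁻¹, by positivity⟩ : NNReal) * ‖B x‖ := by
    intro x
    rcases eq_or_ne x 0 with rfl | hx
    · simp
    · have h1 := hacc x
      have h2 : (inner ℂ (B x) x : ℂ).re ≤ ‖B x‖ * ‖x‖ := by
        calc (inner ℂ (B x) x : ℂ).re ≤ ‖(inner ℂ (B x) x : ℂ)‖ := Complex.re_le_norm _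
          _ = ‖(inner ℂ (B x) x : ℂ)‖ := rfl
          _ ≤ ‖B x‖ * ‖x‖ := norm_inner_le_norm _ _
      have hxpos : 0 < ‖x‖ := norm_pos_iff.mpr hx
      have h3 : κ * ‖x‖ ≤ ‖B x‖ := by nlinarith
      have : ‖x‖ ≤ κ⁻¹ * ‖B x‖ := by
        rw [le_inv_mul_iff₀ hκ]; linarith
      simpa using this
  have hanti := B.antilipschitz_of_bound hbound
  have hclosed : IsClosed (Set.range B) := hanti.isClosed_range B.uniformContinuous
  have hRclosed : IsClosed ((B.range : Submodule ℂ H) : Set H) := by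
    exact hclosed
  haveI : CompleteSpace (B.range : Submodule ℂ H) := hRclosed.completeSpace_coe
  have hrange : B.range = ⊤ := by
    apply Submodule.orthogonal_eq_bot_iff.mp
    rw [Submodule.eq_bot_iff]
    intro x hx
    have h0 : (inner ℂ (B x) x : ℂ) = 0 :=
      hx (B x) (LinearMap.mem_range_self _ x)
    exact hzero x h0
  have hker : B.ker = ⊥ := LinearMap.ker_eq_bot.mpr hinj
  let e := ContinuousLinearEquiv.ofBijective B hker hrange
  have hef : ⇑e = ⇑B := ContinuousLinearEquiv.coeFn_ofBijective B hker hrange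
  refine isUnit_iff_exists.mpr ⟨(e.symm : H →L[ℂ] H), ?_, ?_⟩
  · ext x
    have : B (e.symm x) = e (e.symm x) := by rw [hef]
    simp [ContinuousLinearMap.mul_apply, this]
  · ext x
    have : B x = e x := by rw [hef]
    simp [ContinuousLinearMap.mul_apply, this]

/-- Let `N⁻` be an orthogonal projection on a complex Hilbert space `H`,
`N⁺ := I − N⁻`, and let `B` be bounded and accretive. Then `B` is invertible,
`M_B := N⁺ − B⁻¹N⁻B` is invertible, and the commutation identities
`(B⁻¹N⁻B)M_B⁻¹ = M_B⁻¹N⁻`, `N⁻M_B⁻¹ = M_B⁻¹(B⁻¹N⁻B)`,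
`(B⁻¹N⁺B)M_B⁻¹ = M_B⁻¹N⁺` and `N⁺M_B⁻¹ = M_B⁻¹(B⁻¹N⁺B)` hold. -/
theorem stmt7 (H : Type*) [NormedAddCommGroup H] [InnerProductSpace ℂ H]
    [CompleteSpace H] (Nm : H →L[ℂ] H) (hidem : Nm * Nm = Nm)
    (hsa : IsSelfAdjoint Nm) (B : H →L[ℂ] H) (κ : ℝ) (hκ : 0 < κ)
    (hacc : ∀ h : H, κ * ‖h‖ ^ 2 ≤ (inner ℂ (B h) h : ℂ).re) :
    IsUnit B ∧
    (∀ B' : H →L[ℂ] H, B' * B = 1 → B * B' = 1 →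
      ∀ MB : H →L[ℂ] H, MB = (1 - Nm) - B' * Nm * B →
        IsUnit MB ∧
        ∀ MB' : H →L[ℂ] H, MB' * MB = 1 → MB * MB' = 1 →
          (B' * Nm * B) * MB' = MB' * Nm ∧
          Nm * MB' = MB' * (B' * Nm * B) ∧
          (B' * (1 - Nm) * B) * MB' = MB' * (1 - Nm) ∧
          (1 - Nm) * MB' = MB' * (B' * (1 - Nm) * B)) := by
  refine ⟨acc_isUnit B hκ hacc, ?_⟩
  intro B' hB'B hBB' MB hMB
  -- pointwise facts
  have happ : ∀ {S T : H →L[ℂ] H}, S = T → ∀ x, S x = T x := fun hST x => by rw [hST]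
  have hmul : ∀ (S T : H →L[ℂ] H) (x : H), (S * T) x = S (T x) := fun S T x => rfl
  have hBB'x : ∀ x : H, B (B' x) = x := fun x => by
    have := happ hBB' x; simpa [hmul] using this
  have hB'Bx : ∀ x : H, B' (B x) = x := fun x => by
    have := happ hB'B x; simpa [hmul] using this
  have hNx : ∀ x : H, Nm (Nm x) = Nm x := fun x => by
    have := happ hidem x; simpa [hmul] using this
  have hNsa : ∀ x y : H, (inner ℂ (Nm x) y : ℂ) = inner ℂ x (Nm y) := by
    intro x y
    have hadj : ContinuousLinearMap.adjoint Nm = Nm :=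
      (ContinuousLinearMap.isSelfAdjoint_iff').mp hsa
    conv_lhs => rw [← hadj]
    exact ContinuousLinearMap.adjoint_inner_left Nm y x
  have hzeroB : ∀ v : H, (inner ℂ (B v) v : ℂ) = 0 → v = 0 := by
    intro v hv
    have h1 := hacc v
    rw [hv, Complex.zero_re] at h1
    have h2 : ‖v‖ ^ 2 ≤ 0 := by nlinarith
    have h3 : ‖v‖ = 0 := by nlinarith [norm_nonneg v]
    exact norm_eq_zero.mp h3
  -- B' is accretive
  set κ' : ℝ := κ / (‖B‖ ^ 2 + 1) with hκ'def
  have hκ'pos : 0 < κ' := by positivity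
  have hκeq : κ' * (‖B‖ ^ 2 + 1) = κ := by
    rw [hκ'def]; field_simp
  have hacc' : ∀ h : H, κ' * ‖h‖ ^ 2 ≤ (inner ℂ (B' h) h : ℂ).re := by
    intro h
    have hBg : B (B' h) = h := hBB'x h
    have key : ∀ g : H, (inner ℂ (B' (B g)) (B g) : ℂ).re = (inner ℂ (B g) g : ℂ).re := by
      intro g
      rw [hB'Bx, ← inner_conj_symm g (B g)]
      exact Complex.conj_re _
    have h1 : (inner ℂ (B' h) h : ℂ).re = (inner ℂ (B (B' h)) (B' h) : ℂ).re := by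
      conv_lhs => rw [← hBg]
      exact key (B' h)
    have h2 : ‖h‖ ≤ ‖B‖ * ‖B' h‖ := by
      conv_lhs => rw [← hBg]
      exact B.le_opNorm (B' h)
    have h3 := hacc (B' h)
    rw [h1]
    nlinarith [norm_nonneg h, norm_nonneg (B' h), ContinuousLinearMap.opNorm_nonneg B,
      mul_self_le_mul_self (norm_nonneg h) h2, sq_nonneg (‖B' h‖)]
  -- Pythagoras
  have hpyth : ∀ h : H, ‖Nm h‖ ^ 2 + ‖h - Nm h‖ ^ 2 = ‖h‖ ^ 2 := by
    intro h
    have horth : (inner ℂ (Nm h) (h - Nm h) : ℂ) = 0 := by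
      rw [hNsa]
      have : Nm (h - Nm h) = 0 := by rw [map_sub, hNx, sub_self]
      rw [this, inner_zero_right]
    have hsum : Nm h + (h - Nm h) = h := by abel
    have hns := norm_add_sq (𝕜 := ℂ) (Nm h) (h - Nm h)
    rw [hsum, horth] at hns
    simp at hns
    linarith
  -- D1 and D2 accretive, hence invertible
  have haccD : ∀ (C : H →L[ℂ] H) (c : ℝ), 0 < c →
      (∀ h : H, c * ‖h‖ ^ 2 ≤ (inner ℂ (C h) h : ℂ).re) →
      ∀ h : H, min c 1 * ‖h‖ ^ 2 ≤ (inner ℂ ((Nm * C * Nm + (1 - Nm)) h) h : ℂ).re := by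
    intro C c hc hCacc h
    have e1 : (Nm * C * Nm + (1 - Nm)) h = Nm (C (Nm h)) + (h - Nm h) := by
      simp [ContinuousLinearMap.add_apply, ContinuousLinearMap.mul_apply,
        ContinuousLinearMap.sub_apply, ContinuousLinearMap.one_apply]
    rw [e1, inner_add_left]
    have e2 : (inner ℂ (Nm (C (Nm h))) h : ℂ) = inner ℂ (C (Nm h)) (Nm h) := hNsa _ _
    have e3 : (inner ℂ (h - Nm h) h : ℂ) = (‖h - Nm h‖ ^ 2 : ℝ) := by
      have o1 : (inner ℂ (h - Nm h) (Nm h) : ℂ) = 0 := by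
        rw [← inner_conj_symm, hNsa]
        have : Nm (h - Nm h) = 0 := by rw [map_sub, hNx, sub_self]
        rw [this, inner_zero_right, map_zero]
      have : (inner ℂ (h - Nm h) h : ℂ)
          = inner ℂ (h - Nm h) (h - Nm h) + inner ℂ (h - Nm h) (Nm h) := by
        rw [← inner_add_right]
        congr 1
        abel
      rw [this, o1, add_zero, inner_self_eq_norm_sq_to_K]
      norm_cast
    rw [e2, e3]
    have h4 := hCacc (Nm h)
    have h5 := hpyth h
    have h6 : min c 1 ≤ c := min_le_left _ _
    have h7 : min c 1 ≤ 1 := min_le_right _ _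
    have h8 : 0 < min c 1 := lt_min hc one_pos
    simp only [Complex.add_re]
    have h9 : ((‖h - Nm h‖ ^ 2 : ℝ) : ℂ).re = ‖h - Nm h‖ ^ 2 := by norm_cast
    rw [h9]
    nlinarith [sq_nonneg ‖Nm h‖, sq_nonneg ‖h - Nm h‖]
  set D1 : H →L[ℂ] H := Nm * B * Nm + (1 - Nm) with hD1
  set D2 : H →L[ℂ] H := Nm * B' * Nm + (1 - Nm) with hD2
  have hD1unit : IsUnit D1 :=
    acc_isUnit D1 (lt_min hκ one_pos) (haccD B κ hκ hacc)
  have hD2unit : IsUnit D2 :=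
    acc_isUnit D2 (lt_min hκ'pos one_pos) (haccD B' κ' hκ'pos hacc')
  obtain ⟨u1, hu1⟩ := hD1unit
  obtain ⟨u2, hu2⟩ := hD2unit
  set E1 : H →L[ℂ] H := ↑u1⁻¹ with hE1
  set E2 : H →L[ℂ] H := ↑u2⁻¹ with hE2
  have hE1l : E1 * D1 = 1 := by rw [hE1, ← hu1]; exact u1.inv_mul
  have hE1r : D1 * E1 = 1 := by rw [hE1, ← hu1]; exact u1.mul_inv
  have hE2l : E2 * D2 = 1 := by rw [hE2, ← hu2]; exact u2.inv_mul
  have hE2r : D2 * E2 = 1 := by rw [hE2, ← hu2]; exact u2.mul_inv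
  have hE1rx : ∀ x : H, D1 (E1 x) = x := fun x => by
    have := happ hE1r x; simpa [hmul] using this
  have hE2rx : ∀ x : H, D2 (E2 x) = x := fun x => by
    have := happ hE2r x; simpa [hmul] using this
  -- Nm commutes with D1, D2 hence with E1, E2
  have hND1 : Nm * D1 = D1 * Nm := by
    have h1 : Nm * D1 = Nm * B * Nm := by
      rw [hD1, mul_add, mul_one_sub, hidem, sub_self, add_zero, ← mul_assoc, ← mul_assoc, hidem]
    have h2 : D1 * Nm = Nm * B * Nm := by
      rw [hD1, add_mul, one_sub_mul, hidem, sub_self, add_zero, mul_assoc, hidem]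
    rw [h1, h2]
  have hND2 : Nm * D2 = D2 * Nm := by
    have h1 : Nm * D2 = Nm * B' * Nm := by
      rw [hD2, mul_add, mul_one_sub, hidem, sub_self, add_zero, ← mul_assoc, ← mul_assoc, hidem]
    have h2 : D2 * Nm = Nm * B' * Nm := by
      rw [hD2, add_mul, one_sub_mul, hidem, sub_self, add_zero, mul_assoc, hidem]
    rw [h1, h2]
  have hNE1 : Nm * E1 = E1 * Nm := by
    calc Nm * E1 = 1 * (Nm * E1) := (one_mul _).symm
      _ = (E1 * D1) * (Nm * E1) := by rw [hE1l]
      _ = E1 * ((D1 * Nm) * E1) := by simp only [mul_assoc]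
      _ = E1 * ((Nm * D1) * E1) := by rw [hND1]
      _ = (E1 * Nm) * (D1 * E1) := by simp only [mul_assoc]
      _ = E1 * Nm := by rw [hE1r, mul_one]
  have hNE2 : Nm * E2 = E2 * Nm := by
    calc Nm * E2 = 1 * (Nm * E2) := (one_mul _).symm
      _ = (E2 * D2) * (Nm * E2) := by rw [hE2l]
      _ = E2 * ((D2 * Nm) * E2) := by simp only [mul_assoc]
      _ = E2 * ((Nm * D2) * E2) := by rw [hND2]
      _ = (E2 * Nm) * (D2 * E2) := by simp only [mul_assoc]
      _ = E2 * Nm := by rw [hE2r, mul_one]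
  have hNE1x : ∀ x : H, Nm (E1 x) = E1 (Nm x) := fun x => by
    have := happ hNE1 x; simpa [hmul] using this
  have hNE2x : ∀ x : H, Nm (E2 x) = E2 (Nm x) := fun x => by
    have := happ hNE2 x; simpa [hmul] using this
  have hD1x : ∀ x : H, D1 x = Nm (B (Nm x)) + (x - Nm x) := fun x => by
    rw [hD1]
    simp [ContinuousLinearMap.add_apply, ContinuousLinearMap.mul_apply,
      ContinuousLinearMap.sub_apply, ContinuousLinearMap.one_apply]
  have hD2x : ∀ x : H, D2 x = Nm (B' (Nm x)) + (x - Nm x) := fun x => by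
    rw [hD2]
    simp [ContinuousLinearMap.add_apply, ContinuousLinearMap.mul_apply,
      ContinuousLinearMap.sub_apply, ContinuousLinearMap.one_apply]
  have hMBx : ∀ x : H, MB x = (x - Nm x) - B' (Nm (B x)) := fun x => by
    rw [hMB]
    simp [ContinuousLinearMap.sub_apply, ContinuousLinearMap.mul_apply,
      ContinuousLinearMap.one_apply]
  -- injectivity of MB
  have hinjMB : Function.Injective MB := by
    intro x y hxy
    have h0 : MB (x - y) = 0 := by rw [map_sub, hxy, sub_self]
    set z := x - y with hz
    rw [hMBx] at h0
    have hueq : z - Nm z = B' (Nm (B z)) := sub_eq_zero.mp h0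
    have hBu : B (z - Nm z) = Nm (B z) := by rw [hueq, hBB'x]
    have hip : (inner ℂ (B (z - Nm z)) (z - Nm z) : ℂ) = 0 := by
      rw [hBu, hNsa]
      have : Nm (z - Nm z) = 0 := by rw [map_sub, hNx, sub_self]
      rw [this, inner_zero_right]
    have hz1 : z - Nm z = 0 := hzeroB _ hip
    have hNBz : Nm (B z) = 0 := by rw [← hBu, hz1, map_zero]
    have hzN : z = Nm z := by
      have := sub_eq_zero.mp hz1; exact this
    have hip2 : (inner ℂ (B z) z : ℂ) = 0 := by
      have h3 : (inner ℂ (B z) (Nm z) : ℂ) = 0 := by rw [← hNsa, hNBz, inner_zero_left]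
      rwa [← hzN] at h3
    have : z = 0 := hzeroB z hip2
    exact sub_eq_zero.mp (hz ▸ this)
  -- surjectivity of MB
  have hsurjMB : Function.Surjective MB := by
    intro w
    set a : H := -(E2 (Nm w)) with ha
    set u : H := w + B' a with hu
    set v : H := E1 (a - Nm (B u)) with hv
    refine ⟨u + v, ?_⟩
    have hNa : Nm a = a := by rw [ha, map_neg, hNE2x, hNx]
    have hNB'a : Nm (B' a) = D2 a := by rw [hD2x a, hNa, sub_self, add_zero]
    have hNu : Nm u = 0 := by
      rw [hu, map_add, hNB'a, ha, map_neg, hE2rx]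
      exact add_neg_cancel _
    have hNv : Nm v = v := by
      rw [hv, hNE1x, map_sub, hNa, hNx]
    have hNBv : Nm (B v) = a - Nm (B u) := by
      have h1 : D1 v = Nm (B v) := by rw [hD1x, hNv, sub_self, add_zero]
      rw [← h1, hv, hE1rx]
    rw [hMBx]
    have h2 : Nm (u + v) = v := by rw [map_add, hNu, hNv, zero_add]
    have h3 : Nm (B (u + v)) = a := by
      rw [map_add, map_add, hNBv]; abel
    rw [h2, h3, hu]
    abel
  -- MB is a unit
  have hMBunit : IsUnit MB := by
    have hker : MB.ker = ⊥ := LinearMap.ker_eq_bot.mpr hinjMB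
    have hrange : MB.range = ⊤ := LinearMap.range_eq_top.mpr hsurjMB
    let e := ContinuousLinearEquiv.ofBijective MB hker hrange
    have hef : ⇑e = ⇑MB := ContinuousLinearEquiv.coeFn_ofBijective MB hker hrange
    refine isUnit_iff_exists.mpr ⟨(e.symm : H →L[ℂ] H), ?_, ?_⟩
    · ext x
      have : MB (e.symm x) = e (e.symm x) := by rw [hef]
      simp [ContinuousLinearMap.mul_apply, this]
    · ext x
      have : MB x = e x := by rw [hef]
      simp [ContinuousLinearMap.mul_apply, this]
  refine ⟨hMBunit, ?_⟩
  -- commutation identities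
  intro MB' hM'M hMM'
  set P : H →L[ℂ] H := B' * Nm * B with hP
  have hcanB : ∀ X : H →L[ℂ] H, B * (B' * X) = X := fun X => by
    rw [← mul_assoc, hBB', one_mul]
  have hcanN : ∀ X : H →L[ℂ] H, Nm * (Nm * X) = Nm * X := fun X => by
    rw [← mul_assoc, hidem]
  have hP2 : P * P = P := by
    rw [hP]
    simp only [mul_assoc, hcanB, hcanN]
  have k1 : MB * P = Nm * MB := by
    rw [hMB, sub_mul, one_sub_mul, hP2, mul_sub, mul_one_sub, hidem]
    abel
  have k2 : MB * Nm = P * MB := by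
    rw [hMB, sub_mul, one_sub_mul, hidem, mul_sub, mul_one_sub, hP2]
    abel
  have c1 : ∀ X : H →L[ℂ] H, MB' * (MB * X) = X := fun X => by
    rw [← mul_assoc, hM'M, one_mul]
  have i1 : P * MB' = MB' * Nm := by
    conv_lhs => rw [← c1 (P * MB')]
    rw [← mul_assoc MB P, k1, mul_assoc Nm MB, hMM', mul_one]
  have i2 : Nm * MB' = MB' * P := by
    conv_lhs => rw [← c1 (Nm * MB')]
    rw [← mul_assoc MB Nm, k2, mul_assoc P MB, hMM', mul_one]
  have hPt : B' * (1 - Nm) * B = 1 - P := by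
    rw [mul_one_sub, sub_mul, hB'B, hP]
  refine ⟨i1, i2, ?_, ?_⟩
  · rw [hPt, one_sub_mul, i1, ← mul_one_sub]
  · rw [one_sub_mul, i2, hPt, ← mul_one_sub]
end

section
/- Let E and N be reflection operators on a complex Banach space X (E² = N² = I), and write E^± := ½(I ± E), N^± := ½(I ± N). Let α^+, α^- ∈ ℂ with α^+ ≠ α^-, and set λ := (α^+ + α^-)/(α^+ − α^-). Then for all f, g ∈ X, the pair of equations N^+(α^-E^+ − α^+E^-)f = N^+g and N^-(α^+E^+ − α^-E^-)f = N^-g holds if and only if (λI − EN)f = (2/(α^+ − α^-))·Eg. -/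
/-- For reflection operators `E, N` on a complex Banach space, jump parameters
`α⁺ ≠ α⁻` and `λ := (α⁺ + α⁻)/(α⁺ − α⁻)`, the pair of equations
`N⁺(α⁻E⁺ − α⁺E⁻)f = N⁺g` and `N⁻(α⁺E⁺ − α⁻E⁻)f = N⁻g` holds if and only if
`(λI − EN)f = (2/(α⁺ − α⁻))·Eg`. -/
theorem stmt10 (X : Type*) [NormedAddCommGroup X] [NormedSpace ℂ X]
    (E N : X →L[ℂ] X) (hE : E * E = 1) (hN : N * N = 1)
    (Ep Em Np Nm : X →L[ℂ] X)
    (hEp : Ep = (2⁻¹ : ℂ) • ((1 : X →L[ℂ] X) + E))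
    (hEm : Em = (2⁻¹ : ℂ) • ((1 : X →L[ℂ] X) - E))
    (hNp : Np = (2⁻¹ : ℂ) • ((1 : X →L[ℂ] X) + N))
    (hNm : Nm = (2⁻¹ : ℂ) • ((1 : X →L[ℂ] X) - N))
    (ap am : ℂ) (hne : ap ≠ am) (lam : ℂ) (hlam : lam = (ap + am) / (ap - am)) :
    ∀ f g : X,
      (Np ((am • Ep - ap • Em) f) = Np g ∧ Nm ((ap • Ep - am • Em) f) = Nm g) ↔
      (lam • (1 : X →L[ℂ] X) - E * N) f = (2 / (ap - am)) • E g := by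
  subst hEp hEm hNp hNm
  intro f g
  have hd : ap - am ≠ 0 := sub_ne_zero.mpr hne
  have hEE : ∀ x, E (E x) = x := fun x => by
    have := ContinuousLinearMap.ext_iff.mp hE x
    simpa [ContinuousLinearMap.mul_apply] using this
  have hNN : ∀ x, N (N x) = x := fun x => by
    have := ContinuousLinearMap.ext_iff.mp hN x
    simpa [ContinuousLinearMap.mul_apply] using this
  have hs1 : (ap - am) * lam = ap + am := by rw [hlam]; field_simp
  have hs2 : (ap - am) * (2 / (ap - am)) = 2 := by field_simp
  have hTiff : ((lam • (1 : X →L[ℂ] X) - E * N) f = (2 / (ap - am)) • E g) ↔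
      ((ap + am) • f - (ap - am) • E (N f) = (2 : ℂ) • E g) := by
    simp only [ContinuousLinearMap.sub_apply, ContinuousLinearMap.smul_apply,
      ContinuousLinearMap.one_apply, ContinuousLinearMap.mul_apply]
    constructor
    · intro h
      have := congrArg (fun x => (ap - am) • x) h
      simp only [smul_sub, smul_smul, hs1, hs2] at this
      exact this
    · intro h
      apply smul_right_injective X hd
      show (ap - am) • _ = (ap - am) • _
      simp only [smul_sub, smul_smul, hs1, hs2]
      exact h
  rw [hTiff]
  simp only [ContinuousLinearMap.sub_apply, ContinuousLinearMap.smul_apply,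
    ContinuousLinearMap.add_apply, ContinuousLinearMap.one_apply,
    map_add, map_sub, map_smul, smul_add, smul_sub, smul_smul]
  constructor
  · rintro ⟨h1, h2⟩
    have hA : (ap + am) • E f - (ap - am) • N f = (2 : ℂ) • g := by
      linear_combination (norm := module) (2 : ℂ) • h1 + (2 : ℂ) • h2
    have hT := congrArg E hA
    simp only [map_sub, map_smul, hEE] at hT
    linear_combination (norm := module) hT
  · intro hT
    have hA : (ap + am) • E f - (ap - am) • N f = (2 : ℂ) • g := by
      have := congrArg E hT
      simp only [map_sub, map_smul, hEE] at this
      linear_combination (norm := module) this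
    have hB := congrArg N hA
    simp only [map_sub, map_smul, hNN] at hB
    constructor
    · linear_combination (norm := module) (4⁻¹ : ℂ) • hA + (4⁻¹ : ℂ) • hB
    · linear_combination (norm := module) (4⁻¹ : ℂ) • hA - (4⁻¹ : ℂ) • hB
end

section
/- Let E and N be reflection operators on a complex Hilbert space H (E² = N² = I), with E^± := ½(I ± E), N^± := ½(I ± N), and E^±H, N^±H the ranges of these projections. Then: (a) I − EN is invertible if and only if both restricted projections N^+ : E^-H → N^+H and N^- : E^+H → N^-H are isomorphisms (bounded bijections); (b) I + EN is invertible if and only if both restricted projations N^+ : E^+H → N^+H and N^- : E^-H → N^-H are isomorphisms. -/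
/-- Block-decomposition lemma: if `P, Q` and `P', Q'` are two pairs of complementary
idempotents, then the operator `P' * Q + Q' * P` is bijective iff the restrictions
`P' : ran Q → ran P'` and `Q' : ran P → ran Q'` are bijections. -/
lemma block_bij {H : Type*} [NormedAddCommGroup H] [NormedSpace ℂ H]
    (P Q P' Q' : H →L[ℂ] H)
    (hPQ : P + Q = 1) (hQQ : Q * Q = Q) (hPQ0 : P * Q = 0) (hQP0 : Q * P = 0)
    (hPP : P * P = P)
    (hP'Q' : P' + Q' = 1) (hP'P' : P' * P' = P') (hP'Q'0 : P' * Q' = 0)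
    (hQ'P'0 : Q' * P' = 0) (hQ'Q' : Q' * Q' = Q') :
    Function.Bijective ⇑(P' * Q + Q' * P) ↔
      (Set.BijOn ⇑P' (Set.range ⇑Q) (Set.range ⇑P') ∧
       Set.BijOn ⇑Q' (Set.range ⇑P) (Set.range ⇑Q')) := by
  set A : H →L[ℂ] H := P' * Q + Q' * P with hA
  have hAx : ∀ x, A x = P' (Q x) + Q' (P x) := by
    intro x; simp [hA, ContinuousLinearMap.add_apply, ContinuousLinearMap.mul_apply]
  have app : ∀ (f g h : H →L[ℂ] H), f * g = h → ∀ x, f (g x) = h x := by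
    intro f g h hfg x
    have := DFunLike.congr_fun hfg x
    simpa [ContinuousLinearMap.mul_apply] using this
  have hQfix : ∀ x ∈ Set.range ⇑Q, Q x = x := by
    rintro _ ⟨y, rfl⟩; exact app Q Q Q hQQ y
  have hPfix : ∀ x ∈ Set.range ⇑P, P x = x := by
    rintro _ ⟨y, rfl⟩; exact app P P P hPP y
  have hPQz : ∀ x ∈ Set.range ⇑Q, P x = 0 := by
    rintro _ ⟨y, rfl⟩; simpa using app P Q 0 hPQ0 y
  have hQPz : ∀ x ∈ Set.range ⇑P, Q x = 0 := by
    rintro _ ⟨y, rfl⟩; simpa using app Q P 0 hQP0 y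
  have hsum : ∀ x : H, P x + Q x = x := by
    intro x
    have := DFunLike.congr_fun hPQ x
    simpa [ContinuousLinearMap.add_apply] using this
  have hsum' : ∀ x : H, P' x + Q' x = x := by
    intro x
    have := DFunLike.congr_fun hP'Q' x
    simpa [ContinuousLinearMap.add_apply] using this
  -- applying P' (resp. Q') to A x picks out the corresponding block
  have hP'A : ∀ x, P' (A x) = P' (Q x) := by
    intro x
    rw [hAx, map_add, app P' P' P' hP'P', app P' Q' 0 hP'Q'0]
    simp
  have hQ'A : ∀ x, Q' (A x) = Q' (P x) := by
    intro x
    rw [hAx, map_add, app Q' P' 0 hQ'P'0, app Q' Q' Q' hQ'Q']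
    simp
  constructor
  · intro hbij
    refine ⟨⟨fun x _ => ⟨x, rfl⟩, ?_, ?_⟩, ⟨fun x _ => ⟨x, rfl⟩, ?_, ?_⟩⟩
    · -- InjOn P' on range Q
      intro x hx y hy hxy
      apply hbij.1
      rw [hAx, hAx, hQfix x hx, hQfix y hy, hPQz x hx, hPQz y hy, hxy]
    · -- SurjOn
      rintro y hy
      obtain ⟨x, hxy⟩ := hbij.2 y
      refine ⟨Q x, ⟨x, rfl⟩, ?_⟩
      have h1 : P' (A x) = P' (Q x) := hP'A x
      rw [hxy] at h1
      rw [← h1]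
      obtain ⟨z, rfl⟩ := hy
      exact app P' P' P' hP'P' z
    · -- InjOn Q' on range P
      intro x hx y hy hxy
      apply hbij.1
      rw [hAx, hAx, hPfix x hx, hPfix y hy, hQPz x hx, hQPz y hy, hxy]
    · rintro y hy
      obtain ⟨x, hxy⟩ := hbij.2 y
      refine ⟨P x, ⟨x, rfl⟩, ?_⟩
      have h1 : Q' (A x) = Q' (P x) := hQ'A x
      rw [hxy] at h1
      rw [← h1]
      obtain ⟨z, rfl⟩ := hy
      exact app Q' Q' Q' hQ'Q' z
  · rintro ⟨h1, h2⟩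
    constructor
    · -- injective
      intro x y hxy
      have hd : A (x - y) = 0 := by rw [map_sub, hxy, sub_self]
      have hq0 : P' (Q (x - y)) = 0 := by
        have := hP'A (x - y); rw [hd, map_zero] at this; exact this.symm
      have hp0 : Q' (P (x - y)) = 0 := by
        have := hQ'A (x - y); rw [hd, map_zero] at this; exact this.symm
      have hQd : Q (x - y) = 0 := by
        have h0mem : (0 : H) ∈ Set.range ⇑Q := ⟨0, map_zero Q⟩
        refine h1.injOn ⟨x - y, rfl⟩ h0mem ?_
        rw [hq0, map_zero]
      have hPd : P (x - y) = 0 := by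
        have h0mem : (0 : H) ∈ Set.range ⇑P := ⟨0, map_zero P⟩
        refine h2.injOn ⟨x - y, rfl⟩ h0mem ?_
        rw [hp0, map_zero]
      have := hsum (x - y)
      rw [hQd, hPd, add_zero] at this
      exact sub_eq_zero.mp this.symm
    · -- surjective
      intro y
      obtain ⟨u, hu, hup⟩ := h1.surjOn ⟨y, rfl⟩
      obtain ⟨v, hv, hvq⟩ := h2.surjOn ⟨y, rfl⟩
      refine ⟨u + v, ?_⟩
      rw [hAx]
      simp only [map_add]
      rw [hQfix u hu, hQPz v hv, hPQz u hu, hPfix v hv, map_zero, map_zero,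
        add_zero, zero_add, hup, hvq, hsum' y]

/-- On a Banach space, a continuous linear endomorphism is a unit iff it is bijective. -/
lemma isUnit_iff_bij {H : Type*} [NormedAddCommGroup H] [NormedSpace ℂ H] [CompleteSpace H]
    (T : H →L[ℂ] H) : IsUnit T ↔ Function.Bijective ⇑T := by
  constructor
  · rintro ⟨u, rfl⟩
    refine Function.bijective_iff_has_inverse.2 ⟨⇑(↑u⁻¹ : H →L[ℂ] H), fun x => ?_, fun x => ?_⟩
    · show (↑u⁻¹ : H →L[ℂ] H) ((↑u : H →L[ℂ] H) x) = x
      rw [← ContinuousLinearMap.mul_apply, u.inv_mul, ContinuousLinearMap.one_apply]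
    · show (↑u : H →L[ℂ] H) ((↑u⁻¹ : H →L[ℂ] H) x) = x
      rw [← ContinuousLinearMap.mul_apply, u.mul_inv, ContinuousLinearMap.one_apply]
  · intro h
    let e := ContinuousLinearEquiv.ofBijective T (LinearMap.ker_eq_bot.mpr h.1)
      (LinearMap.range_eq_top.mpr h.2)
    have he : ⇑e = ⇑T := rfl
    refine ⟨⟨T, (e.symm : H →L[ℂ] H), ?_, ?_⟩, rfl⟩
    · ext x
      show T ((e.symm : H →L[ℂ] H) x) = x
      have : T (e.symm x) = e (e.symm x) := by rw [he]
      simpa [this] using e.apply_symm_apply x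
    · ext x
      show (e.symm : H →L[ℂ] H) (T x) = x
      have : T x = e x := by rw [he]
      rw [this]
      exact e.symm_apply_apply x

/-- For reflection operators `E, N` on a complex Hilbert space `H`:
(a) `I − EN` is invertible iff both restricted projections
`N⁺ : E⁻H → N⁺H` and `N⁻ : E⁺H → N⁻H` are isomorphisms (bijections);
(b) `I + EN` is invertible iff both `N⁺ : E⁺H → N⁺H` and
`N⁻ : E⁻H → N⁻H` are isomorphisms. -/
theorem stmt11 (H : Type*) [NormedAddCommGroup H] [InnerProductSpace ℂ H]
    [CompleteSpace H] (E N : H →L[ℂ] H) (hE : E * E = 1) (hN : N * N = 1)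
    (Ep Em Np Nm : H →L[ℂ] H)
    (hEp : Ep = (2⁻¹ : ℂ) • ((1 : H →L[ℂ] H) + E))
    (hEm : Em = (2⁻¹ : ℂ) • ((1 : H →L[ℂ] H) - E))
    (hNp : Np = (2⁻¹ : ℂ) • ((1 : H →L[ℂ] H) + N))
    (hNm : Nm = (2⁻¹ : ℂ) • ((1 : H →L[ℂ] H) - N)) :
    (IsUnit ((1 : H →L[ℂ] H) - E * N) ↔
      (Set.BijOn (fun x => Np x) (Set.range fun x => Em x) (Set.range fun x => Np x) ∧
       Set.BijOn (fun x => Nm x) (Set.range fun x => Ep x) (Set.range fun x => Nm x))) ∧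
    (IsUnit ((1 : H →L[ℂ] H) + E * N) ↔
      (Set.BijOn (fun x => Np x) (Set.range fun x => Ep x) (Set.range fun x => Np x) ∧
       Set.BijOn (fun x => Nm x) (Set.range fun x => Em x) (Set.range fun x => Nm x))) := by
  subst hEp hEm hNp hNm
  set Ep : H →L[ℂ] H := (2⁻¹ : ℂ) • ((1 : H →L[ℂ] H) + E) with hEp
  set Em : H →L[ℂ] H := (2⁻¹ : ℂ) • ((1 : H →L[ℂ] H) - E) with hEm
  set Np : H →L[ℂ] H := (2⁻¹ : ℂ) • ((1 : H →L[ℂ] H) + N) with hNp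
  set Nm : H →L[ℂ] H := (2⁻¹ : ℂ) • ((1 : H →L[ℂ] H) - N) with hNm
  -- idempotency / complementarity facts
  have hEsum : Ep + Em = 1 := by rw [hEp, hEm]; module
  have hNsum : Np + Nm = 1 := by rw [hNp, hNm]; module
  have hEpp : Ep * Ep = Ep := by
    rw [hEp, smul_mul_smul_comm]
    simp only [mul_add, add_mul, mul_one, one_mul, hE]
    module
  have hEmm : Em * Em = Em := by
    rw [hEm, smul_mul_smul_comm]
    simp only [mul_sub, sub_mul, mul_one, one_mul, hE]
    module
  have hEpm : Ep * Em = 0 := by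
    rw [hEp, hEm, smul_mul_smul_comm]
    simp only [mul_sub, sub_mul, add_mul, mul_add, mul_one, one_mul, hE]
    module
  have hEmp : Em * Ep = 0 := by
    rw [hEp, hEm, smul_mul_smul_comm]
    simp only [mul_sub, sub_mul, add_mul, mul_add, mul_one, one_mul, hE]
    module
  have hNpp : Np * Np = Np := by
    rw [hNp, smul_mul_smul_comm]
    simp only [mul_add, add_mul, mul_one, one_mul, hN]
    module
  have hNmm : Nm * Nm = Nm := by
    rw [hNm, smul_mul_smul_comm]
    simp only [mul_sub, sub_mul, mul_one, one_mul, hN]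
    module
  have hNpm : Np * Nm = 0 := by
    rw [hNp, hNm, smul_mul_smul_comm]
    simp only [mul_sub, sub_mul, add_mul, mul_add, mul_one, one_mul, hN]
    module
  have hNmp : Nm * Np = 0 := by
    rw [hNp, hNm, smul_mul_smul_comm]
    simp only [mul_sub, sub_mul, add_mul, mul_add, mul_one, one_mul, hN]
    module
  -- key algebraic identities
  have key1 : Np * Em + Nm * Ep = (2⁻¹ : ℂ) • ((1 : H →L[ℂ] H) - N * E) := by
    rw [hNp, hNm, hEp, hEm, smul_mul_smul_comm, smul_mul_smul_comm]
    simp only [mul_sub, sub_mul, add_mul, mul_add, mul_one, one_mul]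
    module
  have key2 : Np * Ep + Nm * Em = (2⁻¹ : ℂ) • ((1 : H →L[ℂ] H) + N * E) := by
    rw [hNp, hNm, hEp, hEm, smul_mul_smul_comm, smul_mul_smul_comm]
    simp only [mul_sub, sub_mul, add_mul, mul_add, mul_one, one_mul]
    module
  -- conjugation identities
  have conj1 : N * (((1 : H →L[ℂ] H) - E * N) * N) = (1 : H →L[ℂ] H) - N * E := by
    rw [sub_mul, one_mul, mul_assoc E N N, hN, mul_one, mul_sub, hN]
  have conj2 : N * (((1 : H →L[ℂ] H) + E * N) * N) = (1 : H →L[ℂ] H) + N * E := by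
    rw [add_mul, one_mul, mul_assoc E N N, hN, mul_one, mul_add, hN]
  have smul_unit_iff : ∀ T : H →L[ℂ] H, IsUnit ((2⁻¹ : ℂ) • T) ↔ IsUnit T := by
    intro T
    have := isUnit_smul_iff (Units.mk0 (2⁻¹ : ℂ) (by norm_num)) T
    rwa [Units.smul_def, Units.val_mk0] at this
  have step1 : ∀ T : H →L[ℂ] H, IsUnit T ↔ IsUnit (N * (T * N)) := by
    intro T
    let uN : (H →L[ℂ] H)ˣ := ⟨N, N, hN, hN⟩
    rw [show N = (uN : H →L[ℂ] H) from rfl, Units.isUnit_units_mul, Units.isUnit_mul_units]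
  constructor
  · -- part (a)
    rw [step1, conj1, ← smul_unit_iff, ← key1,
      isUnit_iff_bij (Np * Em + Nm * Ep)]
    exact block_bij Ep Em Np Nm hEsum hEmm hEpm hEmp hEpp hNsum hNpp hNpm hNmp hNmm
  · -- part (b)
    rw [step1, conj2, ← smul_unit_iff, ← key2,
      isUnit_iff_bij (Np * Ep + Nm * Em)]
    exact block_bij Em Ep Np Nm (by rw [add_comm]; exact hEsum) hEpp hEmp hEpm hEmm
      hNsum hNpp hNpm hNmp hNmm
end

section
/- Let E and N be reflection operators on a complex Banach space X (E² = N² = I) and suppose E + N is invertible (equivalently, I + EN is invertible, since I + EN = E(E + N)). Then for every g in the range of N^+ := ½(I + N) there exists a unique f in the range of E^+ := ½(I + E) with N^+f = g, and it is given explicitly by f = 2(E + N)^{-1}g. -/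
/-- Let `E, N` be reflection operators on a complex Banach space `X` with
`E + N` invertible. Then for every `g` in the range of `N⁺ := ½(I + N)` there
is a unique `f` in the range of `E⁺ := ½(I + E)` with `N⁺f = g`, and it is
given explicitly by `f = 2(E + N)⁻¹g`. -/
theorem stmt12 (X : Type*) [NormedAddCommGroup X] [NormedSpace ℂ X]
    (E N : X →L[ℂ] X) (hE : E * E = 1) (hN : N * N = 1)
    (Ep Np : X →L[ℂ] X)
    (hEp : Ep = (2⁻¹ : ℂ) • ((1 : X →L[ℂ] X) + E))
    (hNp : Np = (2⁻¹ : ℂ) • ((1 : X →L[ℂ] X) + N))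
    (hInv : IsUnit (E + N)) :
    ∀ g ∈ Set.range (fun x => Np x),
      (∃! f : X, f ∈ Set.range (fun x => Ep x) ∧ Np f = g) ∧
      (2 : ℂ) • (Ring.inverse (E + N)) g ∈ Set.range (fun x => Ep x) ∧
      Np ((2 : ℂ) • (Ring.inverse (E + N)) g) = g := by
  intro g hg
  set S : X →L[ℂ] X := E + N with hS
  set T : X →L[ℂ] X := Ring.inverse S with hT
  have hTS : T * S = 1 := Ring.inverse_mul_cancel S hInv
  have hST : S * T = 1 := Ring.mul_inverse_cancel S hInv
  have hES : E * S = S * N := by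
    rw [hS, mul_add, add_mul, hE, hN]; abel
  have hNS : N * S = S * E := by
    rw [hS, mul_add, add_mul, hE, hN]; abel
  -- T * E = N * T and T * N = E * T
  have hTE : T * E = N * T := by
    calc T * E = T * E * (S * T) := by rw [hST, mul_one]
    _ = T * (E * S) * T := by noncomm_ring
    _ = T * (S * N) * T := by rw [hES]
    _ = (T * S) * (N * T) := by noncomm_ring
    _ = N * T := by rw [hTS, one_mul]
  have hTN : T * N = E * T := by
    calc T * N = T * N * (S * T) := by rw [hST, mul_one]
    _ = T * (N * S) * T := by noncomm_ring
    _ = T * (S * E) * T := by rw [hNS]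
    _ = (T * S) * (E * T) := by noncomm_ring
    _ = E * T := by rw [hTS, one_mul]
  -- N g = g
  have hNNp : N * Np = Np := by
    rw [hNp, mul_smul_comm, mul_add, mul_one, hN, add_comm]
  have hNg : N g = g := by
    obtain ⟨x, hx⟩ := hg
    simp only at hx
    rw [← hx, ← ContinuousLinearMap.mul_apply, hNNp]
  set f : X := (2 : ℂ) • T g with hf
  have hEf : E f = f := by
    rw [hf, map_smul, ← ContinuousLinearMap.mul_apply, ← hTN,
      ContinuousLinearMap.mul_apply, hNg]
  have hfmem : f ∈ Set.range (fun x => Ep x) := by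
    refine ⟨f, ?_⟩
    simp only [hEp, ContinuousLinearMap.smul_apply, ContinuousLinearMap.add_apply,
      ContinuousLinearMap.one_apply, hEf, smul_add]
    rw [← add_smul]
    norm_num
  have hNpf : Np f = g := by
    have hNf : N f = (2 : ℂ) • T (E g) := by
      rw [hf, map_smul, ← ContinuousLinearMap.mul_apply, ← hTE,
        ContinuousLinearMap.mul_apply]
    have : f + N f = (2 : ℂ) • g := by
      rw [hf, hNf, ← smul_add, ← map_add]
      have : g + E g = S g := by
        rw [hS, ContinuousLinearMap.add_apply, hNg, add_comm]
      rw [this, ← ContinuousLinearMap.mul_apply, hTS, ContinuousLinearMap.one_apply]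
    simp only [hNp, ContinuousLinearMap.smul_apply, ContinuousLinearMap.add_apply,
      ContinuousLinearMap.one_apply, this, smul_smul]
    norm_num
  refine ⟨⟨f, ⟨hfmem, hNpf⟩, ?_⟩, hfmem, hNpf⟩
  rintro f' ⟨⟨y, hy⟩, hNpf'⟩
  simp only at hy
  have hEf' : E f' = f' := by
    rw [← hy, hEp]
    simp only [ContinuousLinearMap.smul_apply, ContinuousLinearMap.add_apply,
      ContinuousLinearMap.one_apply, map_smul, map_add]
    rw [← ContinuousLinearMap.mul_apply E E, hE, ContinuousLinearMap.one_apply, add_comm]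
  have hSf' : S f' = (2 : ℂ) • g := by
    rw [hS, ContinuousLinearMap.add_apply, hEf']
    have : f' + N f' = (2 : ℂ) • g := by
      have := hNpf'
      rw [hNp] at this
      simp only [ContinuousLinearMap.smul_apply, ContinuousLinearMap.add_apply,
        ContinuousLinearMap.one_apply] at this
      calc f' + N f' = (2 : ℂ) • ((2⁻¹ : ℂ) • (f' + N f')) := by
            rw [smul_smul]; norm_num
      _ = (2 : ℂ) • g := by rw [this]
    exact this
  calc f' = (T * S) f' := by rw [hTS, ContinuousLinearMap.one_apply]
  _ = T (S f') := rfl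
  _ = (2 : ℂ) • T g := by rw [hSf', map_smul]
  _ = f := rfl
end

section
/- Let P₁^±, P₂^± be two pairs of complementary projections on a complex Hilbert space H. Then the following are equivalent: (i) there is c > 0 with ‖P₁^-f‖ ≥ c‖f‖ for all f in the range of P₂^+; (ii) there is c > 0 with ‖P₂^-f‖ ≥ c‖f‖ for all f in the range of P₁^+; (iii) the ranges of P₁^+ and P₂^+ are transversal, i.e. there is C < ∞ with ‖f₁‖ + ‖f₂‖ ≤ C‖f₁ + f₂‖ for all f₁ in the range of P₁^+ and f₂ in the range of P₂^+. -/
lemma key_aux {H : Type*} [NormedAddCommGroup H] [NormedSpace ℂ H]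
    (Pp Pm Qp : H →L[ℂ] H) (hsum : Pp + Pm = 1) (hmp : Pm * Pp = 0) :
    (∃ c : ℝ, 0 < c ∧ ∀ f ∈ Set.range (fun x => Qp x), c * ‖f‖ ≤ ‖Pm f‖) ↔
      (∃ C : ℝ, ∀ f₁ ∈ Set.range (fun x => Pp x), ∀ f₂ ∈ Set.range (fun x => Qp x),
        ‖f₁‖ + ‖f₂‖ ≤ C * ‖f₁ + f₂‖) := by
  constructor
  · rintro ⟨c, hc, hbound⟩
    refine ⟨1 + 2 * ‖Pm‖ / c, ?_⟩
    rintro f₁ ⟨x, rfl⟩ f₂ hf₂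
    have hz : Pm (Pp x) = 0 := by
      have := DFunLike.congr_fun hmp x
      simpa using this
    have h1 : Pm (Pp x + f₂) = Pm f₂ := by rw [map_add, hz, zero_add]
    have h2 : c * ‖f₂‖ ≤ ‖Pm (Pp x + f₂)‖ := by
      rw [h1]; exact hbound f₂ hf₂
    have h3 : ‖Pm (Pp x + f₂)‖ ≤ ‖Pm‖ * ‖Pp x + f₂‖ := Pm.le_opNorm _
    have h4 : ‖Pp x‖ ≤ ‖Pp x + f₂‖ + ‖f₂‖ := by
      have := norm_sub_le (Pp x + f₂) f₂
      simpa using this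
    have hPm : (0:ℝ) ≤ ‖Pm‖ := norm_nonneg _
    have h5 : c * ‖f₂‖ ≤ ‖Pm‖ * ‖Pp x + f₂‖ := h2.trans h3
    have hA : (0:ℝ) ≤ ‖Pp x + f₂‖ := norm_nonneg _
    show ‖Pp x‖ + ‖f₂‖ ≤ (1 + 2 * ‖Pm‖ / c) * ‖Pp x + f₂‖
    rw [show (1 + 2 * ‖Pm‖ / c) = (c + 2 * ‖Pm‖) / c by field_simp,
      div_mul_eq_mul_div, le_div_iff₀ hc]
    nlinarith [h4, h5, hc.le, hA]
  · rintro ⟨C, hC⟩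
    refine ⟨1 / max C 1, by positivity, ?_⟩
    rintro f ⟨x, rfl⟩
    have hmem : Pp (-(Qp x)) ∈ Set.range (fun x => Pp x) := ⟨-(Qp x), rfl⟩
    have h := hC _ hmem (Qp x) ⟨x, rfl⟩
    have heq : Pp (-(Qp x)) + Qp x = Pm (Qp x) := by
      have := DFunLike.congr_fun hsum (Qp x)
      simp only [ContinuousLinearMap.add_apply, ContinuousLinearMap.one_apply] at this
      rw [map_neg, eq_sub_of_add_eq this]
      abel
    rw [heq] at h
    have h6 : ‖Qp x‖ ≤ max C 1 * ‖Pm (Qp x)‖ := by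
      have : C * ‖Pm (Qp x)‖ ≤ max C 1 * ‖Pm (Qp x)‖ :=
        mul_le_mul_of_nonneg_right (le_max_left _ _) (norm_nonneg _)
      have hn : (0:ℝ) ≤ ‖Pp (-(Qp x))‖ := norm_nonneg _
      linarith
    rw [one_div, inv_mul_le_iff₀ (lt_of_lt_of_le one_pos (le_max_right C 1))]
    linarith [h6]

/-- For two pairs `P₁^±`, `P₂^±` of complementary projections on a complex
Hilbert space, the following are equivalent: (i) `‖P₁⁻f‖ ≳ ‖f‖` on the range of
`P₂⁺`; (ii) `‖P₂⁻f‖ ≳ ‖f‖` on the range of `P₁⁺`; (iii) the ranges of `P₁⁺`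
and `P₂⁺` are transversal: `‖f₁‖ + ‖f₂‖ ≤ C‖f₁ + f₂‖`. -/
theorem stmt13 (H : Type*) [NormedAddCommGroup H] [InnerProductSpace ℂ H]
    [CompleteSpace H]
    (P₁p P₁m P₂p P₂m : H →L[ℂ] H)
    (h₁sum : P₁p + P₁m = 1) (h₁p : P₁p * P₁p = P₁p) (h₁m : P₁m * P₁m = P₁m)
    (h₁pm : P₁p * P₁m = 0) (h₁mp : P₁m * P₁p = 0)
    (h₂sum : P₂p + P₂m = 1) (h₂p : P₂p * P₂p = P₂p) (h₂m : P₂m * P₂m = P₂m)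
    (h₂pm : P₂p * P₂m = 0) (h₂mp : P₂m * P₂p = 0) :
    ((∃ c : ℝ, 0 < c ∧ ∀ f ∈ Set.range (fun x => P₂p x), c * ‖f‖ ≤ ‖P₁m f‖) ↔
      (∃ C : ℝ, ∀ f₁ ∈ Set.range (fun x => P₁p x), ∀ f₂ ∈ Set.range (fun x => P₂p x),
        ‖f₁‖ + ‖f₂‖ ≤ C * ‖f₁ + f₂‖)) ∧
    ((∃ c : ℝ, 0 < c ∧ ∀ f ∈ Set.range (fun x => P₁p x), c * ‖f‖ ≤ ‖P₂m f‖) ↔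
      (∃ C : ℝ, ∀ f₁ ∈ Set.range (fun x => P₁p x), ∀ f₂ ∈ Set.range (fun x => P₂p x),
        ‖f₁‖ + ‖f₂‖ ≤ C * ‖f₁ + f₂‖)) := by
  constructor
  · exact key_aux P₁p P₁m P₂p h₁sum h₁mp
  · rw [key_aux P₂p P₂m P₁p h₂sum h₂mp]
    constructor <;> rintro ⟨C, hC⟩ <;> refine ⟨C, ?_⟩ <;>
      intro f₁ hf₁ f₂ hf₂ <;>
      [(have := hC f₂ hf₂ f₁ hf₁); (have := hC f₂ hf₂ f₁ hf₁)] <;>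
      rw [add_comm f₂ f₁] at this <;> linarith
end
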